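/- arXiv:1610.07396 — 2 statements merged into one kernel-verified Lean document; each statement's English description precedes it below -/
import Mathlib

section
/- If a sequence (C_i) in C(M) satisfies d(C_i, C) → 0 for some C ∈ C(M), then C_i converges to C in the Chabauty topology. -/
open Metric Filter Set Topology

/-- The space of closed subsets of `M`. -/
abbrev ClosedSubsets (M : Type*) [MetricSpace M] := {A : Set M // IsClosed A}

/-- The truncated Hausdorff pseudo-distance `d_R(A,B) = min {1, d_Haus(A_R, B_R)}`,
where `A_R = A ∩ closedBall p R`, with the convention that the Hausdorff distance between
the empty set and a nonempty set is `+∞` (so the truncation gives `1`), and between two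
empty sets is `0`. -/
noncomputable def dR {M : Type*} [MetricSpace M] (p : M) (R : ℝ) (A B : Set M) : ℝ :=
  (min 1 (EMetric.hausdorffEdist (A ∩ closedBall p R) (B ∩ closedBall p R))).toReal

/-- `d(A,B) = ∫₀^∞ e^{-R} d_R(A,B) dR`. -/
noncomputable def dChab {M : Type*} [MetricSpace M] (p : M) (A B : Set M) : ℝ :=
  ∫ R in Ioi (0 : ℝ), Real.exp (-R) * dR p R A B

/-- The Chabauty topology on the space of closed subsets of `M`, generated by the sets
`{C | C ∩ K = ∅}` for `K` compact and `{C | C ∩ U ≠ ∅}` for `U` open. -/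
def Chabauty (M : Type*) [MetricSpace M] : TopologicalSpace (ClosedSubsets M) :=
  TopologicalSpace.generateFrom
    ({S | ∃ K : Set M, IsCompact K ∧ S = {C : ClosedSubsets M | C.1 ∩ K = ∅}} ∪
     {S | ∃ U : Set M, IsOpen U ∧ S = {C : ClosedSubsets M | (C.1 ∩ U).Nonempty}})

open MeasureTheory

/-- Right continuity of the family `A ∩ closedBall p ·` in Hausdorff edistance. -/
lemma set_rightCont {M : Type*} [MetricSpace M] [ProperSpace M] (p : M)
    {A : Set M} (hA : IsClosed A) (r : ℝ) {ε : ℝ} (hε : 0 < ε) :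
    ∃ δ > 0, ∀ s, r ≤ s → s ≤ r + δ →
      EMetric.hausdorffEdist (A ∩ closedBall p s) (A ∩ closedBall p r) ≤ ENNReal.ofReal ε := by
  set T := A ∩ closedBall p r with hT
  set K := (A ∩ closedBall p (r + 1)) ∩ {x | ENNReal.ofReal ε ≤ EMetric.infEdist x T} with hK
  have hKclosed : IsClosed K := by
    apply IsClosed.inter (hA.inter isClosed_closedBall)
    exact isClosed_le continuous_const (EMetric.continuous_infEdist)
  have hKcompact : IsCompact K := by
    apply (isCompact_closedBall p (r + 1)).of_isClosed_subset hKclosed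
    exact fun x hx => hx.1.2
  have key : ∃ δ > 0, δ ≤ 1 ∧ ∀ x ∈ A ∩ closedBall p (r + δ),
      EMetric.infEdist x T ≤ ENNReal.ofReal ε := by
    rcases K.eq_empty_or_nonempty with hKe | hKn
    · refine ⟨1, one_pos, le_refl 1, fun x hx => ?_⟩
      by_contra hcon
      have : x ∈ K := ⟨⟨hx.1, hx.2⟩, (le_of_not_ge (fun hle => hcon hle) :
        ENNReal.ofReal ε ≤ EMetric.infEdist x T)⟩
      · rw [hKe] at this; exact this
    · obtain ⟨x₀, hx₀K, hx₀min⟩ := hKcompact.exists_isMinOn hKn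
        (Continuous.continuousOn (continuous_const.dist continuous_id) : ContinuousOn (fun x => dist p x) K)
      have hx₀r : r < dist p x₀ := by
        by_contra hle
        push_neg at hle
        have hx₀T : x₀ ∈ T := ⟨hx₀K.1.1, by rwa [mem_closedBall, dist_comm]⟩
        have : EMetric.infEdist x₀ T = 0 := EMetric.infEdist_zero_of_mem hx₀T
        have h2 : ENNReal.ofReal ε ≤ EMetric.infEdist x₀ T := hx₀K.2
        rw [this] at h2
        simp only [nonpos_iff_eq_zero, ENNReal.ofReal_eq_zero] at h2
        exact absurd h2 (not_le.mpr hε)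
      refine ⟨min 1 ((dist p x₀ - r) / 2), lt_min one_pos (by linarith), min_le_left _ _,
        fun x hx => ?_⟩
      by_contra hcon
      have hxK : x ∈ K := by
        refine ⟨⟨hx.1, ?_⟩, (le_of_not_gt (fun hlt => hcon (le_of_lt hlt)) :
          ENNReal.ofReal ε ≤ EMetric.infEdist x T)⟩
        · exact mem_closedBall.mpr (le_trans (mem_closedBall.mp hx.2)
            (by have := min_le_left 1 ((dist p x₀ - r) / 2); linarith))
      have h1 := hx₀min hxK
      have h2 : dist p x ≤ r + min 1 ((dist p x₀ - r) / 2) := by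
        rw [dist_comm]; exact mem_closedBall.mp hx.2
      have h3 := min_le_right 1 ((dist p x₀ - r) / 2)
      simp only [IsMinOn, IsMinFilter] at h1
      have : dist p x₀ ≤ dist p x := h1
      linarith
  obtain ⟨δ, hδ, hδ1, hδp⟩ := key
  refine ⟨δ, hδ, fun s hrs hsδ => ?_⟩
  apply EMetric.hausdorffEdist_le_of_infEdist
  · intro x hx
    exact hδp x ⟨hx.1, mem_closedBall.mpr (le_trans (mem_closedBall.mp hx.2) (by linarith))⟩
  · intro x hx
    have : x ∈ A ∩ closedBall p s :=
      ⟨hx.1, mem_closedBall.mpr (le_trans (mem_closedBall.mp hx.2) hrs)⟩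
    rw [EMetric.infEdist_zero_of_mem this]
    exact zero_le

lemma min_one_le_add {b e : ENNReal} : min 1 (b + e) ≤ min 1 b + e := by
  rcases le_or_gt 1 b with hb | hb
  · calc min 1 (b + e) ≤ 1 := min_le_left _ _
      _ = min 1 b := (min_eq_left hb).symm
      _ ≤ min 1 b + e := le_self_add
  · calc min 1 (b + e) ≤ b + e := min_le_right _ _
      _ = min 1 b + e := by rw [min_eq_right hb.le]

lemma dR_le_one {M : Type*} [MetricSpace M] (p : M) (R : ℝ) (A B : Set M) :
    dR p R A B ≤ 1 := by
  unfold dR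
  calc (min 1 (EMetric.hausdorffEdist (A ∩ closedBall p R) (B ∩ closedBall p R))).toReal
      ≤ (1 : ENNReal).toReal := ENNReal.toReal_mono (by simp) (min_le_left _ _)
    _ = 1 := by simp

lemma dR_nonneg {M : Type*} [MetricSpace M] (p : M) (R : ℝ) (A B : Set M) :
    0 ≤ dR p R A B := ENNReal.toReal_nonneg

lemma min_one_ne_top {b : ENNReal} : min 1 b ≠ ⊤ :=
  ne_top_of_le_ne_top (by simp) (min_le_left _ _)

/-- one-sided estimate -/
lemma dR_est {M : Type*} [MetricSpace M] (p : M) {A B : Set M} {s r : ℝ} {ε : ℝ} (hε : 0 ≤ ε)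
    (hA : EMetric.hausdorffEdist (A ∩ closedBall p s) (A ∩ closedBall p r) ≤ ENNReal.ofReal ε)
    (hB : EMetric.hausdorffEdist (B ∩ closedBall p s) (B ∩ closedBall p r) ≤ ENNReal.ofReal ε) :
    dR p s A B ≤ dR p r A B + 2 * ε := by
  set a := EMetric.hausdorffEdist (A ∩ closedBall p s) (B ∩ closedBall p s) with ha
  set b := EMetric.hausdorffEdist (A ∩ closedBall p r) (B ∩ closedBall p r) with hb
  have htri : a ≤ b + (ENNReal.ofReal ε + ENNReal.ofReal ε) := by
    calc a ≤ EMetric.hausdorffEdist (A ∩ closedBall p s) (A ∩ closedBall p r) +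
        EMetric.hausdorffEdist (A ∩ closedBall p r) (B ∩ closedBall p s) :=
          EMetric.hausdorffEdist_triangle
      _ ≤ ENNReal.ofReal ε + (EMetric.hausdorffEdist (A ∩ closedBall p r) (B ∩ closedBall p r) +
          EMetric.hausdorffEdist (B ∩ closedBall p r) (B ∩ closedBall p s)) :=
          add_le_add hA EMetric.hausdorffEdist_triangle
      _ ≤ ENNReal.ofReal ε + (b + ENNReal.ofReal ε) := by
          refine add_le_add le_rfl (add_le_add le_rfl ?_)
          exact EMetric.hausdorffEdist_comm.trans_le hB
      _ = b + (ENNReal.ofReal ε + ENNReal.ofReal ε) := by ring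
  have h1 : min 1 a ≤ min 1 b + (ENNReal.ofReal ε + ENNReal.ofReal ε) :=
    le_trans (min_le_min le_rfl htri) min_one_le_add
  unfold dR
  rw [← ha, ← hb]
  calc (min 1 a).toReal ≤ (min 1 b + (ENNReal.ofReal ε + ENNReal.ofReal ε)).toReal := by
        apply ENNReal.toReal_mono _ h1
        exact ENNReal.add_ne_top.mpr ⟨min_one_ne_top, ENNReal.add_ne_top.mpr
          ⟨ENNReal.ofReal_ne_top, ENNReal.ofReal_ne_top⟩⟩
    _ ≤ (min 1 b).toReal + (ENNReal.ofReal ε + ENNReal.ofReal ε).toReal := ENNReal.toReal_add_le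
    _ ≤ (min 1 b).toReal + 2 * ε := by
        refine add_le_add le_rfl ?_
        rw [← ENNReal.ofReal_add hε hε, ENNReal.toReal_ofReal (by linarith)]
        linarith

lemma dR_rightCont {M : Type*} [MetricSpace M] [ProperSpace M] (p : M)
    {A B : Set M} (hA : IsClosed A) (hB : IsClosed B) (r : ℝ) {ε : ℝ} (hε : 0 < ε) :
    ∃ δ > 0, ∀ s, r ≤ s → s ≤ r + δ → |dR p s A B - dR p r A B| ≤ ε := by
  obtain ⟨δA, hδA, hAc⟩ := set_rightCont p hA r (ε := ε / 4) (by linarith)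
  obtain ⟨δB, hδB, hBc⟩ := set_rightCont p hB r (ε := ε / 4) (by linarith)
  refine ⟨min δA δB, lt_min hδA hδB, fun s hrs hsδ => ?_⟩
  have h1 : EMetric.hausdorffEdist (A ∩ closedBall p s) (A ∩ closedBall p r) ≤
      ENNReal.ofReal (ε / 4) := hAc s hrs (le_trans hsδ (by simp [min_le_left]))
  have h2 : EMetric.hausdorffEdist (B ∩ closedBall p s) (B ∩ closedBall p r) ≤
      ENNReal.ofReal (ε / 4) := hBc s hrs (le_trans hsδ (by simp [min_le_right]))
  have e1 := dR_est p (le_of_lt (by linarith : (0:ℝ) < ε / 4)) h1 h2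
  have h1' : EMetric.hausdorffEdist (A ∩ closedBall p r) (A ∩ closedBall p s) ≤
      ENNReal.ofReal (ε / 4) := EMetric.hausdorffEdist_comm.trans_le h1
  have h2' : EMetric.hausdorffEdist (B ∩ closedBall p r) (B ∩ closedBall p s) ≤
      ENNReal.ofReal (ε / 4) := EMetric.hausdorffEdist_comm.trans_le h2
  have e2 := dR_est p (le_of_lt (by linarith : (0:ℝ) < ε / 4)) h1' h2'
  rw [abs_le]
  constructor <;> linarith

lemma dR_measurable {M : Type*} [MetricSpace M] [ProperSpace M] (p : M)
    {A B : Set M} (hA : IsClosed A) (hB : IsClosed B) :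
    Measurable (fun r => dR p r A B) := by
  have hfn : ∀ n : ℕ, Measurable (fun r : ℝ => dR p ((⌊r * 2 ^ n⌋ + 1) / 2 ^ n) A B) := by
    intro n
    exact (measurable_from_top (f := fun k : ℤ => dR p ((k + 1) / 2 ^ n) A B)).comp
      ((measurable_id.mul_const _).floor)
  apply measurable_of_tendsto_metrizable hfn
  rw [tendsto_pi_nhds]
  intro r
  rw [Metric.tendsto_atTop]
  intro ε hε
  obtain ⟨δ, hδ, hc⟩ := dR_rightCont p hA hB r (ε := ε / 2) (by linarith)
  obtain ⟨N, hN⟩ := pow_unbounded_of_one_lt (y := (2:ℝ)) (1 / δ) one_lt_two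
  refine ⟨N, fun n hn => ?_⟩
  have h2n : (1:ℝ) / δ < 2 ^ n := lt_of_lt_of_le hN (by
    apply pow_le_pow_right₀ (by norm_num) hn)
  have h2pos : (0:ℝ) < 2 ^ n := by positivity
  set t := ((⌊r * 2 ^ n⌋ : ℝ) + 1) / 2 ^ n with hts
  have hrt : r ≤ t := by
    rw [hts, le_div_iff₀ h2pos]
    have := Int.lt_floor_add_one (r * 2 ^ n)
    linarith
  have htr : t ≤ r + δ := by
    rw [hts, div_le_iff₀ h2pos]
    have h1 : (⌊r * 2 ^ n⌋ : ℝ) ≤ r * 2 ^ n := Int.floor_le _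
    have h2 : 1 < 2 ^ n * δ := (div_lt_iff₀ hδ).mp h2n
    nlinarith
  have := hc t hrt htr
  rw [Real.dist_eq]
  push_cast
  calc |dR p t A B - dR p r A B| ≤ ε / 2 := this
    _ < ε := by linarith

lemma dChab_integrable {M : Type*} [MetricSpace M] [ProperSpace M] (p : M)
    {A B : Set M} (hA : IsClosed A) (hB : IsClosed B) :
    IntegrableOn (fun r => Real.exp (-r) * dR p r A B) (Ioi (0:ℝ)) := by
  have hexp : IntegrableOn (fun r : ℝ => Real.exp (-r)) (Ioi (0:ℝ)) := by
    have := exp_neg_integrableOn_Ioi 0 (b := 1) one_pos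
    simpa using this
  apply Integrable.mono' hexp
  · exact ((Real.measurable_exp.comp measurable_neg).mul (dR_measurable p hA hB)).aestronglyMeasurable
  · filter_upwards with r
    rw [Real.norm_eq_abs, abs_mul, abs_of_pos (Real.exp_pos _), abs_of_nonneg (dR_nonneg p r A B)]
    nth_rewrite 2 [← mul_one (Real.exp (-r))]
    exact mul_le_mul_of_nonneg_left (dR_le_one p r A B) (Real.exp_pos _).le

lemma exists_dR_lt {M : Type*} [MetricSpace M] [ProperSpace M] (p : M)
    {A B : Set M} (hA : IsClosed A) (hB : IsClosed B) {R₀ ε : ℝ} (hR₀ : 0 ≤ R₀) (hε : 0 < ε)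
    (hd : dChab p A B < ε * (Real.exp (-R₀) - Real.exp (-(R₀ + 1)))) :
    ∃ R' ∈ Ioo R₀ (R₀ + 1), dR p R' A B < ε := by
  by_contra hcon
  push_neg at hcon
  set f := fun r : ℝ => Real.exp (-r) * dR p r A B with hf
  have hint : IntegrableOn f (Ioi (0:ℝ)) := dChab_integrable p hA hB
  have h1 : ∫ r in Ioo R₀ (R₀ + 1), f r ≤ dChab p A B := by
    unfold dChab
    apply setIntegral_mono_set hint
    · filter_upwards with r
      exact mul_nonneg (Real.exp_pos _).le (dR_nonneg p r A B)
    · filter_upwards with r hr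
      exact lt_of_le_of_lt hR₀ hr.1
  have h2 : ∫ r in Ioo R₀ (R₀ + 1), ε * Real.exp (-r) ≤ ∫ r in Ioo R₀ (R₀ + 1), f r := by
    apply setIntegral_mono_on
    · apply Integrable.const_mul
      exact (exp_neg_integrableOn_Ioi R₀ (b := 1) one_pos).mono
        (fun x hx => by simpa using hx.1) le_rfl |>.congr_fun
        (fun x hx => by simp) measurableSet_Ioo |>.mono_set le_rfl
    · exact hint.mono_set (fun r hr => lt_of_le_of_lt hR₀ hr.1)
    · exact measurableSet_Ioo
    · intro r hr
      rw [mul_comm]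
      exact mul_le_mul_of_nonneg_left (hcon r hr) (Real.exp_pos _).le
  have h3 : ∫ r in Ioo R₀ (R₀ + 1), ε * Real.exp (-r) =
      ε * (Real.exp (-R₀) - Real.exp (-(R₀ + 1))) := by
    rw [MeasureTheory.integral_const_mul]
    congr 1
    rw [← MeasureTheory.integral_Ioc_eq_integral_Ioo,
      ← intervalIntegral.integral_of_le (by linarith : R₀ ≤ R₀ + 1)]
    have : (∫ x in R₀..(R₀ + 1), Real.exp (-x)) = ∫ x in (-(R₀+1))..(-R₀), Real.exp x := by
      simpa using intervalIntegral.integral_comp_neg (a := R₀) (b := R₀ + 1) (fun x => Real.exp x)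
    rw [this, integral_exp]
  linarith

lemma hE_lt_of_dR_lt {M : Type*} [MetricSpace M] (p : M) {A B : Set M} {R' ε : ℝ}
    (hε : 0 < ε) (hε1 : ε ≤ 1) (h : dR p R' A B < ε) :
    EMetric.hausdorffEdist (A ∩ closedBall p R') (B ∩ closedBall p R') < ENNReal.ofReal ε := by
  by_contra hcon
  push_neg at hcon
  have h1 : ENNReal.ofReal ε ≤ min 1 (EMetric.hausdorffEdist (A ∩ closedBall p R')
      (B ∩ closedBall p R')) := by
    refine le_min ?_ hcon
    calc ENNReal.ofReal ε ≤ ENNReal.ofReal 1 := ENNReal.ofReal_le_ofReal hε1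
      _ = 1 := by simp
  have h2 := ENNReal.toReal_mono (ne_top_of_le_ne_top (by simp)
    (min_le_left 1 (EMetric.hausdorffEdist (A ∩ closedBall p R') (B ∩ closedBall p R')))) h1
  rw [ENNReal.toReal_ofReal hε.le] at h2
  exact absurd h (not_lt.mpr h2)

theorem eventually_hE_lt {M : Type*} [MetricSpace M] [ProperSpace M] (p : M)
    (C : ℕ → ClosedSubsets M) (D : ClosedSubsets M)
    (h : Tendsto (fun i => dChab p (C i).1 D.1) atTop (nhds 0))
    {R₀ ε : ℝ} (hR₀ : 0 ≤ R₀) (hε : 0 < ε) (hε1 : ε ≤ 1) :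
    ∀ᶠ i in atTop, ∃ R' ∈ Ioo R₀ (R₀ + 1),
      EMetric.hausdorffEdist ((C i).1 ∩ closedBall p R') (D.1 ∩ closedBall p R')
        < ENNReal.ofReal ε := by
  have hc : (0:ℝ) < ε * (Real.exp (-R₀) - Real.exp (-(R₀ + 1))) := by
    apply mul_pos hε
    have : Real.exp (-(R₀ + 1)) < Real.exp (-R₀) := Real.exp_lt_exp.mpr (by linarith)
    linarith
  filter_upwards [h.eventually_lt_const hc] with i hi
  obtain ⟨R', hR', hdR⟩ := exists_dR_lt p (C i).2 D.2 hR₀ hε hi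
  exact ⟨R', hR', hE_lt_of_dR_lt p hε hε1 hdR⟩

/-- If `d(C_i, C) → 0`, then `C_i → C` in the Chabauty topology. -/
theorem tendsto_chabauty_of_dChab (M : Type*) [MetricSpace M] [ProperSpace M] (p : M)
    (C : ℕ → ClosedSubsets M) (D : ClosedSubsets M)
    (h : Tendsto (fun i => dChab p (C i).1 D.1) atTop (nhds 0)) :
    Tendsto C atTop (@nhds _ (Chabauty M) D) := by
  rw [Chabauty, TopologicalSpace.nhds_generateFrom]
  simp only [tendsto_iInf, tendsto_principal]
  rintro s ⟨hDs, (⟨K, hK, rfl⟩ | ⟨U, hU, rfl⟩)⟩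
  · -- compact case
    simp only [mem_setOf_eq] at hDs ⊢
    rcases K.eq_empty_or_nonempty with rfl | hKne
    · filter_upwards with i; simp
    have hsub : K ⊆ (D.1)ᶜ := by
      rw [subset_compl_iff_disjoint_left]
      exact Set.disjoint_iff_inter_eq_empty.mpr hDs
    obtain ⟨δ, hδ, hthick⟩ := hK.exists_thickening_subset_open (isOpen_compl_iff.mpr D.2) hsub
    obtain ⟨R₁, hR₁⟩ := hK.isBounded.subset_closedBall p
    set R₀ := max R₁ 0 with hR₀def
    set ε := min δ 1 with hεdef
    have hεpos : 0 < ε := lt_min hδ one_pos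
    filter_upwards [eventually_hE_lt p C D h (le_max_right R₁ 0) hεpos (min_le_right δ 1)]
      with i hi
    obtain ⟨R', hR', hhE⟩ := hi
    by_contra hne
    obtain ⟨z, hz⟩ := nonempty_iff_ne_empty.mpr hne
    have hzC : z ∈ (C i).1 ∩ closedBall p R' := by
      refine ⟨hz.1, ?_⟩
      have hzb : z ∈ closedBall p R₁ := hR₁ hz.2
      rw [mem_closedBall] at hzb ⊢
      calc dist z p ≤ R₁ := hzb
        _ ≤ R₀ := le_max_left _ _
        _ ≤ R' := hR'.1.le
    have hinf : EMetric.infEdist z (D.1 ∩ closedBall p R') < ENNReal.ofReal ε :=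
      lt_of_le_of_lt (EMetric.infEdist_le_hausdorffEdist_of_mem hzC) hhE
    obtain ⟨y, hy, hzy⟩ := EMetric.infEdist_lt_iff.mp hinf
    have hyth : y ∈ thickening δ K := by
      rw [mem_thickening_iff_exists_edist_lt]
      refine ⟨z, hz.2, ?_⟩
      calc edist y z = edist z y := edist_comm y z
        _ < ENNReal.ofReal ε := hzy
        _ ≤ ENNReal.ofReal δ := ENNReal.ofReal_le_ofReal (min_le_left _ _)
    exact (hthick hyth) hy.1
  · -- open case
    simp only [mem_setOf_eq] at hDs ⊢
    obtain ⟨x, hxD, hxU⟩ := hDs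
    obtain ⟨ε₀, hε₀, hball⟩ := Metric.isOpen_iff.mp hU x hxU
    set ε := min ε₀ 1 / 2 with hεdef
    have hεpos : 0 < ε := by positivity
    have hε1 : ε ≤ 1 := by
      have := min_le_right ε₀ 1; rw [hεdef]; linarith
    set R₀ := max (dist p x) 0 with hR₀def
    filter_upwards [eventually_hE_lt p C D h (le_max_right _ 0) hεpos hε1] with i hi
    obtain ⟨R', hR', hhE⟩ := hi
    have hxDR : x ∈ D.1 ∩ closedBall p R' := by
      refine ⟨hxD, mem_closedBall.mpr ?_⟩
      calc dist x p = dist p x := dist_comm x p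
        _ ≤ R₀ := le_max_left _ _
        _ ≤ R' := hR'.1.le
    have hinf : EMetric.infEdist x ((C i).1 ∩ closedBall p R') < ENNReal.ofReal ε := by
      refine lt_of_le_of_lt (EMetric.infEdist_le_hausdorffEdist_of_mem hxDR) ?_
      rwa [EMetric.hausdorffEdist_comm]
    obtain ⟨y, hy, hxy⟩ := EMetric.infEdist_lt_iff.mp hinf
    refine ⟨y, hy.1, hball ?_⟩
    rw [mem_ball, dist_comm]
    have hd : dist x y < ε := edist_lt_ofReal.mp hxy
    have hεε₀ : ε < ε₀ := by
      have := min_le_left ε₀ 1; rw [hεdef]; linarith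
    linarith
end

section
/- If a sequence (C_i) in C(M) converges to C ∈ C(M) in the Chabauty topology, then d(C_i, C) → 0. -/
open Metric Filter Set Topology

section Aux

variable {M : Type*} [MetricSpace M] [ProperSpace M]

/-- In a proper space, the `infEdist` to `B ∩ closedBall p R` is the (increasing) limit of the
`infEdist` to `B ∩ closedBall p q` as `q ↓ R` over rationals. -/
lemma infEdist_inter_closedBall_eq_iSup (B : Set M) (hB : IsClosed B) (p x : M) (R : ℝ) :
    EMetric.infEdist x (B ∩ closedBall p R)
      = ⨆ (q : ℚ) (_ : R < (q : ℝ)), EMetric.infEdist x (B ∩ closedBall p (q : ℝ)) := by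
  apply le_antisymm
  · set L := ⨆ (q : ℚ) (_ : R < (q : ℝ)), EMetric.infEdist x (B ∩ closedBall p (q : ℝ)) with hL
    refine ENNReal.le_of_forall_pos_le_add fun ε hε hLtop => ?_
    -- the nested nonempty compact sets
    set t : ℕ → Set M := fun n =>
      B ∩ closedBall p (R + 1 / (n + 1)) ∩ {y | edist x y ≤ L + ε} with ht
    have htcl : ∀ n, IsClosed (t n) := fun n =>
      ((hB.inter isClosed_closedBall).inter
        (isClosed_le (continuous_const.edist continuous_id) continuous_const))
    have htsub : ∀ n, t (n + 1) ⊆ t n := by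
      intro n
      apply inter_subset_inter_left
      apply inter_subset_inter_right
      apply closedBall_subset_closedBall
      have h1 : (0:ℝ) < (n:ℝ) + 1 := by positivity
      have : (1 : ℝ) / (n + 1 + 1) ≤ 1 / (n + 1) :=
        one_div_le_one_div_of_le h1 (by linarith)
      push_cast
      linarith
    have htne : ∀ n, (t n).Nonempty := by
      intro n
      obtain ⟨q, hq1, hq2⟩ := exists_rat_btwn (lt_add_of_pos_right R (show (0:ℝ) < 1/((n:ℝ)+1) by positivity))
      have h1 : EMetric.infEdist x (B ∩ closedBall p (q : ℝ)) ≤ L := by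
        rw [hL]
        exact le_iSup₂ (f := fun (q : ℚ) (_ : R < (q : ℝ)) =>
          EMetric.infEdist x (B ∩ closedBall p (q : ℝ))) q hq1
      have h2 : EMetric.infEdist x (B ∩ closedBall p (q : ℝ)) < L + ε :=
        h1.trans_lt (ENNReal.lt_add_right hLtop.ne (by exact_mod_cast hε.ne'))
      obtain ⟨y, hy, hxy⟩ := EMetric.infEdist_lt_iff.1 h2
      exact ⟨y, ⟨⟨hy.1, closedBall_subset_closedBall hq2.le hy.2⟩, hxy.le⟩⟩
    have h0 : IsCompact (t 0) := by
      apply (isCompact_closedBall p (R + 1)).of_isClosed_subset (htcl 0)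
      intro y hy
      apply closedBall_subset_closedBall _ hy.1.2
      norm_num
    obtain ⟨y, hy⟩ := IsCompact.nonempty_iInter_of_sequence_nonempty_isCompact_isClosed
      t htsub htne h0 htcl
    simp only [mem_iInter] at hy
    have hyB : y ∈ B := (hy 0).1.1
    have hyball : y ∈ closedBall p R := by
      simp only [mem_closedBall]
      refine le_of_forall_pos_le_add fun δ hδ => ?_
      obtain ⟨n, hn⟩ := exists_nat_one_div_lt hδ
      have := (hy n).1.2
      simp only [mem_closedBall] at this
      have : dist y p ≤ R + 1 / (n + 1) := by exact_mod_cast this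
      linarith
    calc EMetric.infEdist x (B ∩ closedBall p R) ≤ edist x y :=
          EMetric.infEdist_le_edist_of_mem ⟨hyB, hyball⟩
      _ ≤ L + ε := (hy 0).2
  · refine iSup₂_le fun q hq => ?_
    exact EMetric.infEdist_anti
      (inter_subset_inter_right _ (closedBall_subset_closedBall hq.le))

lemma measurable_sup_infEdist (p : M) (A B : Set M) (hB : IsClosed B) :
    Measurable (fun R : ℝ =>
      ⨆ y ∈ A ∩ closedBall p R, EMetric.infEdist y (B ∩ closedBall p R)) := by
  have heq : ∀ R : ℝ, (⨆ y ∈ A ∩ closedBall p R, EMetric.infEdist y (B ∩ closedBall p R))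
      = ⨆ q : ℚ, if R < (q : ℝ) then
          (⨆ y ∈ A ∩ closedBall p R, EMetric.infEdist y (B ∩ closedBall p (q : ℝ))) else 0 := by
    intro R
    apply le_antisymm
    · refine iSup₂_le fun y hy => ?_
      rw [infEdist_inter_closedBall_eq_iSup B hB p y R]
      refine iSup₂_le fun q hq => ?_
      refine le_trans ?_ (le_iSup _ q)
      rw [if_pos hq]
      exact le_iSup₂ (f := fun y (_ : y ∈ A ∩ closedBall p R) =>
        EMetric.infEdist y (B ∩ closedBall p (q : ℝ))) y hy
    · refine iSup_le fun q => ?_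
      split_ifs with hq
      · refine iSup₂_le fun y hy => ?_
        refine le_trans (EMetric.infEdist_anti
          (inter_subset_inter_right _ (closedBall_subset_closedBall hq.le))) ?_
        exact le_iSup₂ (f := fun y (_ : y ∈ A ∩ closedBall p R) =>
          EMetric.infEdist y (B ∩ closedBall p R)) y hy
      · exact zero_le
  simp only [heq]
  apply Measurable.iSup
  intro q
  apply Measurable.ite (show MeasurableSet {R : ℝ | R < (q:ℝ)} from measurableSet_Iio) ?_ measurable_const
  have : Monotone (fun R : ℝ =>
      ⨆ y ∈ A ∩ closedBall p R, EMetric.infEdist y (B ∩ closedBall p (q : ℝ))) := by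
    intro R R' hRR'
    exact biSup_mono (inter_subset_inter_right _ (closedBall_subset_closedBall hRR'))
  exact this.measurable

lemma measurable_dR (p : M) (A B : Set M) (hA : IsClosed A) (hB : IsClosed B) :
    Measurable (fun R : ℝ => dR p R A B) := by
  unfold dR
  apply Measurable.ennreal_toReal
  apply Measurable.min measurable_const
  simp only [EMetric.hausdorffEdist, Metric.hausdorffEDist_def]
  exact (measurable_sup_infEdist p A B hB).sup (measurable_sup_infEdist p B A hA)

lemma chab_compact {C : ℕ → ClosedSubsets M} {D : ClosedSubsets M}
    (h : Tendsto C atTop (@nhds _ (Chabauty M) D)) {K : Set M} (hK : IsCompact K)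
    (hDK : D.1 ∩ K = ∅) : ∀ᶠ i in atTop, (C i).1 ∩ K = ∅ := by
  letI := Chabauty M
  have hopen : IsOpen {C : ClosedSubsets M | C.1 ∩ K = ∅} :=
    TopologicalSpace.isOpen_generateFrom_of_mem (Or.inl ⟨K, hK, rfl⟩)
  exact h (hopen.mem_nhds hDK)

lemma chab_open {C : ℕ → ClosedSubsets M} {D : ClosedSubsets M}
    (h : Tendsto C atTop (@nhds _ (Chabauty M) D)) {U : Set M} (hU : IsOpen U)
    (hDU : (D.1 ∩ U).Nonempty) : ∀ᶠ i in atTop, ((C i).1 ∩ U).Nonempty := by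
  letI := Chabauty M
  have hopen : IsOpen {C : ClosedSubsets M | (C.1 ∩ U).Nonempty} :=
    TopologicalSpace.isOpen_generateFrom_of_mem (Or.inr ⟨U, hU, rfl⟩)
  exact h (hopen.mem_nhds hDU)

lemma finite_of_separated {K S : Set M} (hK : IsCompact K) (hSK : S ⊆ K) {ε : ℝ} (hε : 0 < ε)
    (hsep : ∀ x ∈ S, ∀ y ∈ S, x ≠ y → ε ≤ dist x y) : S.Finite := by
  obtain ⟨t, ht⟩ := hK.elim_finite_subcover (fun x : M => ball x (ε / 2))
    (fun _ => isOpen_ball) (fun x hx => mem_iUnion.2 ⟨x, mem_ball_self (by positivity)⟩)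
  have hS : S ⊆ ⋃ x ∈ t, S ∩ ball x (ε / 2) := by
    intro y hy
    obtain ⟨x, hx1, hx2⟩ := mem_iUnion₂.1 (ht (hSK hy))
    exact mem_iUnion₂.2 ⟨x, hx1, hy, hx2⟩
  refine Set.Finite.subset (Set.Finite.biUnion t.finite_toSet fun x _ => ?_) hS
  apply Set.Subsingleton.finite
  intro a ha b hb
  by_contra hab
  have := hsep a ha.1 b hb.1 hab
  have : dist a b < ε := by
    calc dist a b ≤ dist a x + dist x b := dist_triangle a x b
      _ < ε / 2 + ε / 2 :=
          add_lt_add (mem_ball.1 ha.2) (by rw [dist_comm]; exact mem_ball.1 hb.2)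
      _ = ε := by ring
  linarith [hsep a ha.1 b hb.1 hab]

lemma bad_countable (p : M) (D : Set M) :
    {R : ℝ | 0 < R ∧ ¬(D ∩ closedBall p R ⊆ closure (D ∩ ball p R))}.Countable := by
  set Bad := fun (n m : ℕ) => {R : ℝ | R ≤ n ∧ ∃ x ∈ D, dist x p = R ∧
    ENNReal.ofReal (1 / (m + 1)) ≤ EMetric.infEdist x (D ∩ ball p R)} with hBad
  have hsub : {R : ℝ | 0 < R ∧ ¬(D ∩ closedBall p R ⊆ closure (D ∩ ball p R))}
      ⊆ ⋃ (n : ℕ) (m : ℕ), Bad n m := by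
    rintro R ⟨hR, hbad⟩
    rw [not_subset] at hbad
    obtain ⟨x, hx, hxc⟩ := hbad
    have hxd : dist x p = R := by
      rcases lt_or_eq_of_le (mem_closedBall.1 hx.2) with h | h
      · exact absurd (subset_closure (s := D ∩ ball p R) ⟨hx.1, mem_ball.2 h⟩) hxc
      · exact h
    have hpos : EMetric.infEdist x (D ∩ ball p R) ≠ 0 := by
      intro h0
      exact hxc (EMetric.mem_closure_iff_infEdist_zero.2 h0)
    obtain ⟨m, hm⟩ := ENNReal.exists_inv_nat_lt hpos
    obtain ⟨n, hn⟩ := exists_nat_ge R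
    refine mem_iUnion₂.2 ⟨n, m, ?_⟩
    refine ⟨hn, x, hx.1, hxd, le_trans ?_ hm.le⟩
    have heq : ENNReal.ofReal (1 / ((m : ℝ) + 1)) = ((m : ENNReal) + 1)⁻¹ := by
      rw [one_div, ENNReal.ofReal_inv_of_pos (by positivity)]
      congr 1
      rw [ENNReal.ofReal_add (by positivity) zero_le_one, ENNReal.ofReal_natCast,
        ENNReal.ofReal_one]
    push_cast
    rw [heq]
    gcongr
    exact le_self_add
  refine Set.Countable.mono hsub ?_
  refine Set.countable_iUnion fun n => Set.countable_iUnion fun m => Set.Finite.countable ?_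
  -- each Bad n m is finite
  rcases isEmpty_or_nonempty M with hM | hM
  · refine Set.Finite.subset (Set.finite_empty) ?_
    rintro R ⟨-, x, -⟩
    exact (hM.false x).elim
  have hwit : ∀ R ∈ Bad n m, ∃ x, x ∈ D ∧ dist x p = R ∧
      ENNReal.ofReal (1 / (m + 1)) ≤ EMetric.infEdist x (D ∩ ball p R) := fun R hR => hR.2
  choose! w hw1 hw2 hw3 using hwit
  have hinj : Set.InjOn w (Bad n m) := by
    intro R1 h1 R2 h2 he
    rw [← hw2 R1 h1, ← hw2 R2 h2, he]
  refine Set.Finite.of_finite_image ?_ hinj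
  have himsub : w '' Bad n m ⊆ closedBall p n := by
    rintro _ ⟨R, hR, rfl⟩
    rw [mem_closedBall, hw2 R hR]
    exact hR.1
  refine finite_of_separated (isCompact_closedBall p n) himsub
    (show (0:ℝ) < 1 / (m + 1) by positivity) ?_
  rintro _ ⟨R1, h1, rfl⟩ _ ⟨R2, h2, rfl⟩ hne
  wlog hlt : R1 < R2 generalizing R1 R2
  · rw [dist_comm]
    refine this R2 h2 R1 h1 (Ne.symm hne) ?_
    rcases lt_trichotomy R1 R2 with h | h | h
    · exact absurd h hlt
    · exact absurd (by rw [h]) hne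
    · exact h
  have hmem : w R1 ∈ D ∩ ball p R2 := by
    refine ⟨hw1 R1 h1, mem_ball.2 ?_⟩
    rw [hw2 R1 h1]; exact hlt
  have := le_trans (hw3 R2 h2) (EMetric.infEdist_le_edist_of_mem hmem)
  rw [edist_dist] at this
  rw [dist_comm]
  exact (ENNReal.ofReal_le_ofReal_iff dist_nonneg).1 this

lemma eventually_hausdorffEdist_le {C : ℕ → ClosedSubsets M} {D : ClosedSubsets M}
    (h : Tendsto C atTop (@nhds _ (Chabauty M) D)) {R : ℝ} (hR : 0 < R) (p : M)
    (hgood : D.1 ∩ closedBall p R ⊆ closure (D.1 ∩ ball p R)) {ε : ℝ} (hε : 0 < ε) :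
    ∀ᶠ i in atTop, EMetric.hausdorffEdist ((C i).1 ∩ closedBall p R) (D.1 ∩ closedBall p R)
      ≤ ENNReal.ofReal ε := by
  by_cases hDe : (D.1 ∩ closedBall p R).Nonempty
  · -- main case
    set T := D.1 ∩ closedBall p R with hT
    have hTc : IsCompact T := (isCompact_closedBall p R).inter_left D.2
    -- direction (a): points of C i near T
    set K := closedBall p R ∩ {x | ENNReal.ofReal ε ≤ EMetric.infEdist x T} with hK
    have hKcl : IsClosed K := isClosed_closedBall.inter
      (isClosed_le continuous_const EMetric.continuous_infEdist)
    have hKc : IsCompact K := (isCompact_closedBall p R).of_isClosed_subset hKcl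
      inter_subset_left
    have hDK : D.1 ∩ K = ∅ := by
      rw [eq_empty_iff_forall_notMem]
      rintro x ⟨hxD, hxB, hxe⟩
      have hxT : x ∈ T := ⟨hxD, hxB⟩
      have hxe' : ENNReal.ofReal ε ≤ EMetric.infEdist x T := hxe
      rw [EMetric.infEdist, EMetric.infEdist_zero_of_mem hxT, nonpos_iff_eq_zero,
        ENNReal.ofReal_eq_zero] at hxe'
      linarith
    have ev1 := chab_compact h hKc hDK
    -- direction (b): cover T by finitely many small balls
    have hcov : T ⊆ ⋃ y ∈ T, ball y (ε / 4) := fun y hy =>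
      mem_iUnion₂.2 ⟨y, hy, mem_ball_self (by positivity)⟩
    obtain ⟨b, hbT, hbfin, hbcov⟩ := hTc.elim_finite_subcover_image
      (fun y _ => isOpen_ball) hcov
    have hy' : ∀ y ∈ b, ∃ y', y' ∈ D.1 ∩ ball p R ∧ dist y y' < ε / 4 := by
      intro y hy
      have := hgood (hbT hy)
      rw [Metric.mem_closure_iff] at this
      obtain ⟨y', hy'1, hy'2⟩ := this (ε / 4) (by positivity)
      exact ⟨y', hy'1, hy'2⟩
    rcases isEmpty_or_nonempty M with hM | hM
    · exact (hM.false p).elim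
    choose! y' hy'mem hy'dist using hy'
    have ev2 : ∀ᶠ i in atTop, ∀ y ∈ b,
        ((C i).1 ∩ ball (y' y) (min (ε / 4) (R - dist (y' y) p))).Nonempty := by
      rw [eventually_all_finite hbfin]
      intro y hy
      apply chab_open h isOpen_ball
      refine ⟨y' y, (hy'mem y hy).1, mem_ball_self ?_⟩
      refine lt_min (by positivity) ?_
      have := mem_ball.1 (hy'mem y hy).2
      linarith
    filter_upwards [ev1, ev2] with i h1 h2
    apply EMetric.hausdorffEdist_le_of_infEdist
    · rintro x ⟨hxC, hxB⟩
      by_contra hcon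
      have : x ∈ (C i).1 ∩ K := ⟨hxC, hxB, (not_le.1 hcon).le⟩
      rw [h1] at this
      exact this
    · intro z hz
      obtain ⟨y, hyb, hzy⟩ := mem_iUnion₂.1 (hbcov hz)
      obtain ⟨w, hwC, hwball⟩ := h2 y hyb
      have hw1 : dist w (y' y) < ε / 4 := (mem_ball.1 hwball).trans_le (min_le_left _ _)
      have hw2 : dist w (y' y) < R - dist (y' y) p :=
        (mem_ball.1 hwball).trans_le (min_le_right _ _)
      have hwmem : w ∈ (C i).1 ∩ closedBall p R := by
        refine ⟨hwC, mem_closedBall.2 ?_⟩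
        calc dist w p ≤ dist w (y' y) + dist (y' y) p := dist_triangle _ _ _
          _ ≤ R := by linarith
      refine le_trans (EMetric.infEdist_le_edist_of_mem hwmem) ?_
      rw [edist_dist]
      apply ENNReal.ofReal_le_ofReal
      calc dist z w ≤ dist z y + dist y (y' y) + dist (y' y) w :=
            dist_triangle4 z y (y' y) w
        _ ≤ ε / 4 + ε / 4 + ε / 4 := by
            have h1' := mem_ball.1 hzy
            have h2' := hy'dist y hyb
            have h3' : dist (y' y) w < ε / 4 := by rw [dist_comm]; exact hw1
            linarith
        _ ≤ ε := by linarith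
  · -- D ∩ closedBall p R is empty
    rw [not_nonempty_iff_eq_empty] at hDe
    obtain ⟨R', hRR', hDR'⟩ : ∃ R', R < R' ∧ D.1 ∩ closedBall p R' = ∅ := by
      by_cases h1 : (D.1 ∩ closedBall p (R + 1)).Nonempty
      · have hcpt : IsCompact (D.1 ∩ closedBall p (R + 1)) :=
          (isCompact_closedBall p (R + 1)).inter_left D.2
        obtain ⟨y, hy, hymin⟩ := hcpt.exists_isMinOn h1
          (continuous_id.dist continuous_const).continuousOn
        set m := dist y p with hm
        have hmR : R < m := by
          by_contra hc
          have : y ∈ D.1 ∩ closedBall p R := ⟨hy.1, mem_closedBall.2 (not_lt.1 hc)⟩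
          rw [hDe] at this
          exact this
        refine ⟨(R + min m (R + 1)) / 2, by
          have : R < min m (R + 1) := lt_min hmR (by linarith)
          linarith, ?_⟩
        rw [eq_empty_iff_forall_notMem]
        rintro z ⟨hzD, hzB⟩
        have hz1 : dist z p ≤ (R + min m (R + 1)) / 2 := mem_closedBall.1 hzB
        have hz2 : z ∈ D.1 ∩ closedBall p (R + 1) := by
          refine ⟨hzD, mem_closedBall.2 ?_⟩
          have : min m (R + 1) ≤ R + 1 := min_le_right _ _
          linarith
        have := hymin hz2
        simp only [← hm] at this
        have hmin : min m (R + 1) ≤ m := min_le_left _ _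
        have : m ≤ dist z p := this
        have hRm : R < min m (R + 1) := lt_min hmR (by linarith)
        linarith
      · exact ⟨R + 1, by linarith, not_nonempty_iff_eq_empty.1 h1⟩
    have ev := chab_compact h (isCompact_closedBall p R') hDR'
    filter_upwards [ev] with i hi
    have : (C i).1 ∩ closedBall p R = ∅ := by
      rw [eq_empty_iff_forall_notMem]
      rintro z ⟨hz1, hz2⟩
      have : z ∈ (C i).1 ∩ closedBall p R' :=
        ⟨hz1, closedBall_subset_closedBall hRR'.le hz2⟩
      rw [hi] at this
      exact this
    rw [this, hDe, EMetric.hausdorffEdist, Metric.hausdorffEDist_self]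
    exact zero_le

lemma tendsto_dR_of_good {C : ℕ → ClosedSubsets M} {D : ClosedSubsets M}
    (h : Tendsto C atTop (@nhds _ (Chabauty M) D)) {R : ℝ} (hR : 0 < R) (p : M)
    (hgood : D.1 ∩ closedBall p R ⊆ closure (D.1 ∩ ball p R)) :
    Tendsto (fun i => dR p R (C i).1 D.1) atTop (nhds 0) := by
  rw [Metric.tendsto_atTop]
  intro ε hε
  have key := eventually_hausdorffEdist_le h hR p hgood (half_pos hε)
  rw [eventually_atTop] at key
  obtain ⟨N, hN⟩ := key
  refine ⟨N, fun n hn => ?_⟩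
  have hle : dR p R (C n).1 D.1 ≤ ε / 2 := by
    unfold dR
    calc (min 1 (EMetric.hausdorffEdist ((C n).1 ∩ closedBall p R)
          (D.1 ∩ closedBall p R))).toReal
        ≤ (ENNReal.ofReal (ε / 2)).toReal := by
          apply ENNReal.toReal_mono ENNReal.ofReal_ne_top
          exact le_trans (min_le_right _ _) (hN n hn)
      _ = ε / 2 := ENNReal.toReal_ofReal (by positivity)
  have hge : 0 ≤ dR p R (C n).1 D.1 := ENNReal.toReal_nonneg
  rw [Real.dist_eq, sub_zero, abs_of_nonneg hge]
  linarith

end Aux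

/-- If `C_i → C` in the Chabauty topology, then `d(C_i, C) → 0`. -/
theorem dChab_tendsto_of_chabauty (M : Type*) [MetricSpace M] [ProperSpace M] (p : M)
    (C : ℕ → ClosedSubsets M) (D : ClosedSubsets M)
    (h : Tendsto C atTop (@nhds _ (Chabauty M) D)) :
    Tendsto (fun i => dChab p (C i).1 D.1) atTop (nhds 0) := by
  unfold dChab
  have hmeas : ∀ n : ℕ, MeasureTheory.AEStronglyMeasurable
      (fun R : ℝ => Real.exp (-R) * dR p R (C n).1 D.1)
      (MeasureTheory.volume.restrict (Ioi (0 : ℝ))) := fun n =>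
    ((Real.continuous_exp.comp continuous_neg).measurable.mul
      (measurable_dR p (C n).1 D.1 (C n).2 D.2)).aestronglyMeasurable
  have hint : MeasureTheory.Integrable (fun R : ℝ => Real.exp (-R))
      (MeasureTheory.volume.restrict (Ioi (0 : ℝ))) := by
    have := exp_neg_integrableOn_Ioi 0 (one_pos (α := ℝ))
    simpa using this.integrable
  have hbound : ∀ n : ℕ, ∀ᵐ R ∂(MeasureTheory.volume.restrict (Ioi (0 : ℝ))),
      ‖Real.exp (-R) * dR p R (C n).1 D.1‖ ≤ Real.exp (-R) := by
    intro n
    filter_upwards with R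
    have h1 : 0 ≤ dR p R (C n).1 D.1 := ENNReal.toReal_nonneg
    have h2 : dR p R (C n).1 D.1 ≤ 1 := by
      have := ENNReal.toReal_mono (ENNReal.one_ne_top)
        (min_le_left 1 (EMetric.hausdorffEdist ((C n).1 ∩ closedBall p R)
          (D.1 ∩ closedBall p R)))
      simpa [dR] using this
    rw [norm_mul, Real.norm_eq_abs, Real.norm_eq_abs, abs_of_pos (Real.exp_pos _),
      abs_of_nonneg h1]
    nlinarith [Real.exp_pos (-R)]
  have hbadnull : MeasureTheory.volume
      {R : ℝ | 0 < R ∧ ¬(D.1 ∩ closedBall p R ⊆ closure (D.1 ∩ ball p R))} = 0 :=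
    (bad_countable p D.1).measure_zero _
  have hlim : ∀ᵐ R ∂(MeasureTheory.volume.restrict (Ioi (0 : ℝ))),
      Tendsto (fun n => Real.exp (-R) * dR p R (C n).1 D.1) atTop
        (nhds ((fun _ : ℝ => (0 : ℝ)) R)) := by
    have h1 : ∀ᵐ R ∂(MeasureTheory.volume.restrict (Ioi (0 : ℝ))),
        R ∉ {R : ℝ | 0 < R ∧ ¬(D.1 ∩ closedBall p R ⊆ closure (D.1 ∩ ball p R))} :=
      MeasureTheory.ae_restrict_of_ae (MeasureTheory.measure_eq_zero_iff_ae_notMem.mp hbadnull)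
    have h2 : ∀ᵐ R ∂(MeasureTheory.volume.restrict (Ioi (0 : ℝ))), R ∈ Ioi (0 : ℝ) :=
      MeasureTheory.ae_restrict_mem measurableSet_Ioi
    filter_upwards [h1, h2] with R hR1 hR2
    have hRpos : (0 : ℝ) < R := hR2
    have hgood : D.1 ∩ closedBall p R ⊆ closure (D.1 ∩ ball p R) := by
      by_contra hc
      exact hR1 ⟨hRpos, hc⟩
    have := (tendsto_dR_of_good h hRpos p hgood).const_mul (Real.exp (-R))
    simpa using this
  have := MeasureTheory.tendsto_integral_of_dominated_convergence
    (μ := MeasureTheory.volume.restrict (Ioi (0 : ℝ)))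
    (F := fun n (R : ℝ) => Real.exp (-R) * dR p R (C n).1 D.1)
    (f := fun _ : ℝ => (0 : ℝ)) (bound := fun R : ℝ => Real.exp (-R))
    hmeas hint hbound hlim
  simpa using this
end
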